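/- Let ρ be a density matrix in the family such that whenever ρ^Γ is positive semidefinite the matrix X is diagonal. Then ρ^Γ positive semidefinite implies ρ is separable; i.e., for such subfamilies the PPT criterion is necessary and sufficient for separability. -/

import Mathlib

open Complex Matrix BigOperators
open scoped ComplexOrder

noncomputable section

def PT {dA dB : ℕ} (ρ : Matrix (Fin dA × Fin dB) (Fin dA × Fin dB) ℂ) :
    Matrix (Fin dA × Fin dB) (Fin dA × Fin dB) ℂ :=
  fun p q => ρ (p.1, q.2) (q.1, p.2)

def famState (dA dB : ℕ) (x : ℕ → ℕ → ℂ) (M N : ℕ → ℕ → ℕ → ℂ) :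
    Matrix (Fin dA × Fin dB) (Fin dA × Fin dB) ℂ :=
  fun p q =>
    (if (p.2 : ℕ) = (q.1 : ℕ) ∧ (q.2 : ℕ) = (p.1 : ℕ) then x p.1 q.1 else 0) +
    (if p.1 = q.1 ∧ (p.2 : ℕ) < (p.1 : ℕ) ∧ (q.2 : ℕ) < (q.1 : ℕ) then M p.1 p.2 q.2 else 0) +
    (if p.1 = q.1 ∧ (p.1 : ℕ) < (p.2 : ℕ) ∧ (q.1 : ℕ) < (q.2 : ℕ) then N p.1 p.2 q.2 else 0)

def SepState {dA dB : ℕ} (ρ : Matrix (Fin dA × Fin dB) (Fin dA × Fin dB) ℂ) : Prop :=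
  ∃ (n : ℕ) (p : Fin n → ℝ) (A : Fin n → Matrix (Fin dA) (Fin dA) ℂ)
    (B : Fin n → Matrix (Fin dB) (Fin dB) ℂ),
    (∀ i, 0 ≤ p i) ∧ (∑ i, p i = 1) ∧
    (∀ i, (A i).PosSemidef ∧ (A i).trace = 1) ∧
    (∀ i, (B i).PosSemidef ∧ (B i).trace = 1) ∧
    ρ = ∑ i, (p i : ℂ) • (Matrix.kroneckerMap (· * ·) (A i) (B i))

open scoped Kronecker

lemma kron_conjTranspose {m n p q : Type*} (A : Matrix m n ℂ) (B : Matrix p q ℂ) :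
    (A ⊗ₖ B)ᴴ = Aᴴ ⊗ₖ Bᴴ := by
  ext ⟨i,j⟩ ⟨k,l⟩
  simp [conjTranspose_apply, kroneckerMap_apply, mul_comm]

lemma psd_kron {m p : Type*} [Fintype m] [Fintype p] [DecidableEq m] [DecidableEq p]
    {A : Matrix m m ℂ} {B : Matrix p p ℂ} (hA : A.PosSemidef) (hB : B.PosSemidef) :
    (A ⊗ₖ B).PosSemidef := by
  exact hA.kronecker hB

lemma psd_smul {m : Type*} [Fintype m] {c : ℝ} (hc : 0 ≤ c) {A : Matrix m m ℂ}
    (hA : A.PosSemidef) : ((c : ℂ) • A).PosSemidef := by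
  constructor
  · unfold Matrix.IsHermitian
    rw [conjTranspose_smul, hA.1]
    congr 1
    simp
  · intro x
    exact (hA.smul (by exact_mod_cast hc : (0:ℂ) ≤ (c:ℂ))).2 x

lemma psd_sum {m : Type*} [Fintype m] {k : ℕ} (f : Fin k → Matrix m m ℂ)
    (hf : ∀ i, (f i).PosSemidef) : (∑ i, f i).PosSemidef := by
  classical
  induction k with
  | zero => simpa using Matrix.PosSemidef.zero
  | succ n ih =>
      rw [Fin.sum_univ_succ]
      exact ((hf 0).add (ih _ (fun i => hf i.succ)))

lemma psd_diag {m : Type*} [Fintype m] [DecidableEq m] {A : Matrix m m ℂ}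
    (hA : A.PosSemidef) (i : m) : 0 ≤ A i i := by
  exact hA.diag_nonneg

lemma psd_trace_zero {m : Type*} [Fintype m] [DecidableEq m] {A : Matrix m m ℂ}
    (hA : A.PosSemidef) (h : A.trace = 0) : A = 0 := by
  exact hA.trace_eq_zero_iff.mp h

lemma sep_ppt {dA dB : ℕ} {ρ : Matrix (Fin dA × Fin dB) (Fin dA × Fin dB) ℂ}
    (h : SepState ρ) : (PT ρ).PosSemidef := by
  obtain ⟨n, p, A, B, hp, _, hA, hB, rfl⟩ := h
  have hPT : PT (∑ i, (p i : ℂ) • (Matrix.kroneckerMap (· * ·) (A i) (B i)))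
      = ∑ i, (p i : ℂ) • ((A i) ⊗ₖ (B i)ᵀ) := by
    ext ⟨k,i⟩ ⟨l,j⟩
    simp [PT, Matrix.sum_apply, Matrix.smul_apply, kroneckerMap_apply, transpose_apply]
  rw [hPT]
  exact psd_sum _ fun i => psd_smul (hp i) (psd_kron (hA i).1 ((hB i).1.transpose))

theorem famState_diagonal_X_PPT_iff_sep (dA dB : ℕ) (hd : dA ≤ dB)
    (x : ℕ → ℕ → ℂ) (M N : ℕ → ℕ → ℕ → ℂ)
    (hρ : (famState dA dB x M N).PosSemidef)
    (htr : (famState dA dB x M N).trace = 1)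
    (hdiag : (PT (famState dA dB x M N)).PosSemidef →
      ∀ m n, m < dA → n < dA → m ≠ n → x m n = 0) :
    ((PT (famState dA dB x M N)).PosSemidef → SepState (famState dA dB x M N)) ∧
    (SepState (famState dA dB x M N) ↔ (PT (famState dA dB x M N)).PosSemidef) := by
  have main : (PT (famState dA dB x M N)).PosSemidef → SepState (famState dA dB x M N) := by
    intro hppt
    have hX := hdiag hppt
    -- block diagonality
    have hblock : ∀ (k l : Fin dA) (i j : Fin dB), k ≠ l →
        famState dA dB x M N (k, i) (l, j) = 0 := by
      intro k l i j hkl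
      have hkl' : (k : ℕ) ≠ (l : ℕ) := fun h => hkl (Fin.ext h)
      simp only [famState]
      simp [hkl, hX k l k.2 l.2 hkl']
    -- positivity of dimensions
    have hdA : 0 < dA := by
      rcases Nat.eq_zero_or_pos dA with h | h
      · subst h
        rw [Matrix.trace] at htr
        simp at htr
      · exact h
    have hdB : 0 < dB := by
      rcases Nat.eq_zero_or_pos dB with h | h
      · subst h
        rw [Matrix.trace] at htr
        simp at htr
      · exact h
    -- blocks
    set Bm : Fin dA → Matrix (Fin dB) (Fin dB) ℂ :=
      fun k => (famState dA dB x M N).submatrix (fun i => (k, i)) (fun i => (k, i)) with hBm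
    have hBpsd : ∀ k, (Bm k).PosSemidef := fun k => hρ.submatrix _
    set t : Fin dA → ℝ := fun k => ((Bm k).trace).re with ht
    have htnn : ∀ k, 0 ≤ (Bm k).trace := fun k =>
      Finset.sum_nonneg fun i _ => psd_diag (hBpsd k) i
    have ht0 : ∀ k, 0 ≤ t k := fun k => (Complex.nonneg_iff.mp (htnn k)).1
    have htc : ∀ k, ((t k : ℝ) : ℂ) = (Bm k).trace := by
      intro k
      obtain ⟨h1, h2⟩ := Complex.nonneg_iff.mp (htnn k)
      exact Complex.ext (by simp [ht]) (by simp [ht, ← h2])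
    have htrace_sum : ∑ k, (Bm k).trace = 1 := by
      rw [← htr, Matrix.trace, Fintype.sum_prod_type]
      rfl
    have hts : ∑ k, t k = 1 := by
      have : ((∑ k, t k : ℝ) : ℂ) = 1 := by
        push_cast
        rw [Finset.sum_congr rfl (fun k _ => htc k), htrace_sum]
      exact_mod_cast this
    -- component density matrices
    refine ⟨dA, t, fun k => Matrix.diagonal (Pi.single k 1),
      fun k => if h : t k = 0 then Matrix.diagonal (Pi.single (⟨0, hdB⟩ : Fin dB) 1)
        else (((t k)⁻¹ : ℝ) : ℂ) • Bm k, ht0, hts, ?_, ?_, ?_⟩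
    · intro k
      constructor
      · refine Matrix.PosSemidef.diagonal ?_
        intro i
        by_cases h : i = k <;> simp [h, Pi.single_apply]
      · simp [Matrix.trace_diagonal, Finset.sum_pi_single]
    · intro k
      dsimp only
      by_cases h : t k = 0
      · rw [dif_pos h]
        constructor
        · refine Matrix.PosSemidef.diagonal ?_
          intro i
          by_cases h' : i = (⟨0, hdB⟩ : Fin dB) <;> simp [h', Pi.single_apply]
        · simp [Matrix.trace_diagonal, Finset.sum_pi_single]
      · rw [dif_neg h]
        refine ⟨psd_smul (inv_nonneg.mpr (ht0 k)) (hBpsd k), ?_⟩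
        rw [Matrix.trace_smul, smul_eq_mul, ← htc k]
        push_cast
        field_simp
    -- the decomposition identity
    · ext ⟨k, i⟩ ⟨l, j⟩
      simp only [Matrix.sum_apply, Matrix.smul_apply, kroneckerMap_apply, smul_eq_mul]
      by_cases hkl : k = l
      · subst hkl
        rw [Finset.sum_eq_single k (fun m _ hm => by
            simp [Matrix.diagonal_apply_eq, Pi.single_apply, Ne.symm hm])
          (fun h => absurd (Finset.mem_univ k) h)]
        rw [Matrix.diagonal_apply_eq]
        simp only [Pi.single_eq_same, one_mul]
        by_cases h : t k = 0
        · rw [dif_pos h]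
          have hB0 : Bm k = 0 := by
            apply psd_trace_zero (hBpsd k)
            rw [← htc k, h]
            simp
          have : famState dA dB x M N (k, i) (k, j) = Bm k i j := rfl
          rw [this, hB0, h]
          simp
        · rw [dif_neg h]
          have : famState dA dB x M N (k, i) (k, j) = Bm k i j := rfl
          rw [this]
          simp only [Matrix.smul_apply, smul_eq_mul]
          rw [← mul_assoc, ← Complex.ofReal_mul, mul_inv_cancel₀ h]
          simp
      · rw [hblock k l i j hkl]
        refine (Finset.sum_eq_zero fun m _ => ?_).symm
        rw [Matrix.diagonal_apply_ne _ hkl]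
        simp
  exact ⟨main, ⟨sep_ppt, main⟩⟩
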